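/- Let p be prime and m ∈ ℕ. The ring ℤ_{p^m}[x]/I_{p,m}, where I_{p,m} = {f ∈ ℤ_{p^m}[x] : f(kp) = 0 for all k}, is indecomposable: it contains exactly two idempotent elements. -/

import Mathlib

/-- The ideal `I_{p,m}` of polynomials over `ℤ/p^mℤ` vanishing on all
multiples of `p`, realized as the kernel of evaluation at all multiples of
`p`. -/
noncomputable def Ipm (p m : ℕ) : Ideal (Polynomial (ZMod (p ^ m))) :=
  RingHom.ker (Pi.ringHom (fun k : ZMod (p ^ m) => Polynomial.evalRingHom (k * p)))

section aux

variable {p m : ℕ}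

private lemma aux_neZero (hp : p.Prime) : NeZero (p ^ m) :=
  ⟨pow_ne_zero m hp.pos.ne'⟩

private lemma aux_not_isUnit_p (hp : p.Prime) (hm : 0 < m) :
    ¬ IsUnit ((p : ZMod (p ^ m))) := by
  haveI : NeZero (p ^ m) := aux_neZero hp
  haveI : Fact p.Prime := ⟨hp⟩
  intro h
  have h2 := h.map (ZMod.castHom (dvd_pow_self p hm.ne') (ZMod p))
  rw [map_natCast, ZMod.natCast_self] at h2
  exact not_isUnit_zero h2

/-- idempotents of `ZMod (p ^ m)` are `0` or `1`. -/
private lemma aux_idem (hp : p.Prime) (hm : 0 < m) {a : ZMod (p ^ m)}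
    (ha : a * a = a) : a = 0 ∨ a = 1 := by
  haveI : NeZero (p ^ m) := aux_neZero hp
  haveI : Fact p.Prime := ⟨hp⟩
  set π := ZMod.castHom (dvd_pow_self p hm.ne') (ZMod p) with hπ
  have key : ∀ b : ZMod (p ^ m), π b ≠ 0 → IsUnit b := by
    intro b hb
    have hbv : ¬ p ∣ b.val := by
      intro hd
      apply hb
      rw [hπ, ZMod.castHom_apply, ← ZMod.natCast_val, ZMod.natCast_eq_zero_iff]
      exact hd
    have hco : Nat.Coprime b.val (p ^ m) :=
      Nat.Coprime.pow_right m ((Nat.Prime.coprime_iff_not_dvd hp).mpr hbv).symm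
    have := (ZMod.isUnit_iff_coprime b.val (p ^ m)).mpr hco
    rwa [ZMod.natCast_val, ZMod.cast_id] at this
  have hz : a * (1 - a) = 0 := by rw [mul_sub, mul_one, ha, sub_self]
  by_cases h0 : π a = 0
  · have h1 : π (1 - a) ≠ 0 := by
      rw [map_sub, map_one, h0, sub_zero]
      exact one_ne_zero
    have hu := key _ h1
    left
    exact (hu.mul_left_eq_zero).mp hz
  · have hu := key _ h0
    right
    have h2 : 1 - a = 0 := (hu.mul_right_eq_zero).mp hz
    exact (eq_of_sub_eq_zero h2).symm

end aux

/-- The ring `ℤ_{p^m}[x]/I_{p,m}` is indecomposable: it has exactly two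
idempotents, `0` and `1`. -/
theorem quotient_indecomposable (p : ℕ) (hp : p.Prime) (m : ℕ) (hm : 0 < m) :
    {e : Polynomial (ZMod (p ^ m)) ⧸ Ipm p m | IsIdempotentElem e} = {0, 1} := by
  ext e
  simp only [Set.mem_setOf_eq, Set.mem_insert_iff, Set.mem_singleton_iff]
  constructor
  · intro he
    obtain ⟨f, rfl⟩ := Ideal.Quotient.mk_surjective e
    have hmem : f * f - f ∈ Ipm p m := by
      rw [← Ideal.Quotient.eq]
      exact_mod_cast he
    have hval : ∀ k : ZMod (p ^ m),
        f.eval (k * p) * f.eval (k * p) = f.eval (k * p) := by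
      intro k
      simp only [Ipm, RingHom.mem_ker] at hmem
      have h2 := congrFun hmem k
      change Polynomial.eval (k * p) (f * f - f) = 0 at h2
      simp only [Pi.ringHom_apply, Polynomial.coe_evalRingHom, Pi.zero_apply,
        Polynomial.eval_sub, Polynomial.eval_mul, sub_eq_zero] at h2
      exact h2
    have h0 : f.eval 0 * f.eval 0 = f.eval 0 := by
      have := hval 0
      simpa using this
    have hconst : ∀ k : ZMod (p ^ m), f.eval (k * p) = f.eval 0 := by
      intro k
      have hdvd : (p : ZMod (p ^ m)) ∣ f.eval (k * p) - f.eval 0 := by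
        have h1 : (k * p - 0) ∣ f.eval (k * p) - f.eval 0 :=
          Polynomial.sub_dvd_eval_sub _ _ f
        rw [sub_zero] at h1
        exact dvd_trans (dvd_mul_left _ _) h1
      rcases aux_idem hp hm (hval k) with hk | hk <;>
        rcases aux_idem hp hm h0 with h0' | h0' <;> rw [hk, h0'] at hdvd ⊢
      · exfalso
        rw [zero_sub, dvd_neg] at hdvd
        exact aux_not_isUnit_p hp hm (isUnit_of_dvd_one hdvd)
      · exfalso
        rw [sub_zero] at hdvd
        exact aux_not_isUnit_p hp hm (isUnit_of_dvd_one hdvd)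
    have hmem2 : f - Polynomial.C (f.eval 0) ∈ Ipm p m := by
      rw [Ipm, RingHom.mem_ker]
      funext k
      change Polynomial.eval (k * p) (f - Polynomial.C (f.eval 0)) = 0
      simp [hconst k]
    have key : Ideal.Quotient.mk (Ipm p m) f
        = Ideal.Quotient.mk (Ipm p m) (Polynomial.C (f.eval 0)) :=
      Ideal.Quotient.eq.mpr hmem2
    rcases aux_idem hp hm h0 with h0' | h0'
    · left
      rw [key, h0', Polynomial.C_0, map_zero]
    · right
      rw [key, h0', Polynomial.C_1, map_one]
  · rintro (rfl | rfl)
    · exact IsIdempotentElem.zero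
    · exact IsIdempotentElem.one
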